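/- Let H(ϑ) = H₀ + Δ̃_m(ϑ) be the fiber Schrödinger operator, where H₀ = Δ₀ + Q is independent of ϑ and 0 ≤ Δ̃_m(ϑ) ≤ 2B_m. Then the total length of the spectral bands satisfies Σ_{n=1}^{ν} (λ_n⁺ − λ_n⁻) ≤ 2 Tr B_m = 4I, where λ_n⁻ = min_ϑ λ_n(ϑ), λ_n⁺ = max_ϑ λ_n(ϑ) are the band edges, λ_n(ϑ) the eigenvalues of H(ϑ) in increasing order, and I = (1/2)#supp m. -/

import Mathlib

open Classical Finset

/-- A (multi)graph given by oriented edges. -/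
structure OGraph (V A : Type) where
  head : A → V
  tail : A → V
  rev : A → A
  rev_rev : ∀ e, rev (rev e) = e
  rev_ne : ∀ e, rev e ≠ e
  head_rev : ∀ e, head (rev e) = tail e

namespace OGraph

variable {V A : Type}

/-- `G.IsWalkFrom l u v` : the list of oriented edges `l` is a walk from `u` to `v`. -/
def IsWalkFrom (G : OGraph V A) : List A → V → V → Prop
  | [], u, v => u = v
  | e :: l, u, v => G.head e = u ∧ G.IsWalkFrom l (G.tail e) v

end OGraph

namespace OGraph

variable {V A : Type}

/-- The degree of a vertex. -/
noncomputable def deg [Fintype A] (G : OGraph V A) (v : V) : ℕ :=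
  (Finset.univ.filter (fun e => G.head e = v)).card

/-- The number of oriented edges in the support of a 1-form. -/
noncomputable def suppCard [Fintype A] {d : ℕ} (m : A → Fin d → ℝ) : ℕ :=
  (Finset.univ.filter (fun e => m e ≠ 0)).card

/-- The fiber Schrödinger operator `H(ϑ) = H₀ + Δ̃_m(ϑ)`, `H₀ = Δ₀ + Q`, as a
matrix: `Δ₀` is the Laplacian of the edges outside `supp m` (their coefficient
is `1`, independent of `ϑ`), and the edges of `supp m` carry the coefficient
`e^{i⟨m(e),ϑ⟩}` of the magnetic Laplacian `Δ̃_m(ϑ)`. -/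
noncomputable def fiberMatrix [Fintype V] [Fintype A] [DecidableEq V] {d : ℕ}
    (G : OGraph V A) (m : A → Fin d → ℝ) (Q : V → ℝ) (ϑ : Fin d → ℝ) :
    Matrix V V ℂ :=
  Matrix.of fun v u =>
    (if v = u then (((G.deg v : ℝ) + Q v : ℝ) : ℂ) else 0)
    - ∑ e ∈ Finset.univ.filter (fun e => G.head e = v ∧ G.tail e = u),
        (if m e = 0 then 1
          else Complex.exp (Complex.I * ((∑ i, m e i * ϑ i : ℝ) : ℂ)))

end OGraph


set_option linter.unusedSectionVars false
set_option maxHeartbeats 1600000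

namespace SumBandAux

open Matrix Finset

section Graph

variable {V A : Type} [Fintype V] [Fintype A] [DecidableEq V] {d : ℕ}
  (G : OGraph V A) (m : A → Fin d → ℝ) (Q : V → ℝ) (ϑ : Fin d → ℝ)

lemma tail_rev (e : A) : G.tail (G.rev e) = G.head e := by
  conv_rhs => rw [← G.rev_rev e]
  exact (G.head_rev (G.rev e)).symm

noncomputable def om (e : A) : ℂ := Complex.exp (Complex.I * ((∑ i, m e i * ϑ i : ℝ) : ℂ))

noncomputable def sm : Finset A := univ.filter (fun e => m e ≠ 0)

lemma rev_mem_sm (hm : ∀ e, m (G.rev e) = - m e) {e : A} (he : e ∈ sm m) : G.rev e ∈ sm m := by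
  simp only [sm, mem_filter, mem_univ, true_and] at he ⊢
  rw [hm]; simpa using he

lemma sum_rev (hm : ∀ e, m (G.rev e) = - m e) (F : A → ℂ) :
    ∑ e ∈ sm m, F e = ∑ e ∈ sm m, F (G.rev e) := by
  refine Finset.sum_nbij' (fun e => G.rev e) (fun e => G.rev e) ?_ ?_ ?_ ?_ ?_ <;>
    intro a ha <;>
    first
      | exact rev_mem_sm G m hm ha
      | exact G.rev_rev a
      | rw [G.rev_rev]

lemma om_rev (hm : ∀ e, m (G.rev e) = - m e) (e : A) :
    om m ϑ (G.rev e) = starRingEnd ℂ (om m ϑ e) := by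
  unfold om
  rw [← Complex.exp_conj, _root_.map_mul, Complex.conj_I, Complex.conj_ofReal]
  congr 1
  have h : (∑ i, m (G.rev e) i * ϑ i) = -∑ i, m e i * ϑ i := by
    simp [hm, neg_mul]
  rw [h]; push_cast; ring

lemma om_mul_conj (e : A) : om m ϑ e * starRingEnd ℂ (om m ϑ e) = 1 := by
  unfold om
  rw [← Complex.exp_conj, ← Complex.exp_add, _root_.map_mul, Complex.conj_I, Complex.conj_ofReal]
  simp

lemma collapse (F : A → ℂ) :
    ∑ v, ∑ u, ∑ e ∈ (sm m).filter (fun e => G.head e = v ∧ G.tail e = u), F e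
      = ∑ e ∈ sm m, F e := by
  rw [← Finset.sum_fiberwise (sm m) G.head F]
  refine Finset.sum_congr rfl fun v _ => ?_
  rw [← Finset.sum_fiberwise ((sm m).filter (fun e => G.head e = v)) G.tail F]
  refine Finset.sum_congr rfl fun u _ => ?_
  rw [Finset.filter_filter]

noncomputable def dm (v : V) : ℕ := ((sm m).filter (fun e => G.head e = v)).card

noncomputable def Lmat (ε : ℂ) : Matrix V V ℂ :=
  Matrix.of fun v u =>
    (if v = u then ((dm G m v : ℝ) : ℂ) else 0)
    + ε * ∑ e ∈ (sm m).filter (fun e => G.head e = v ∧ G.tail e = u), om m ϑ e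

lemma quad_eq (ε : ℂ) (x : V → ℂ) :
    star x ⬝ᵥ (Lmat G m ϑ ε *ᵥ x) =
      (∑ e ∈ sm m, starRingEnd ℂ (x (G.head e)) * x (G.head e))
      + ε * ∑ e ∈ sm m, starRingEnd ℂ (x (G.head e)) * om m ϑ e * x (G.tail e) := by
  have expand : star x ⬝ᵥ (Lmat G m ϑ ε *ᵥ x)
      = ∑ v, ∑ u, starRingEnd ℂ (x v) * Lmat G m ϑ ε v u * x u := by
    simp only [dotProduct, mulVec, Finset.mul_sum]
    exact Finset.sum_congr rfl fun v _ => Finset.sum_congr rfl fun u _ => by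
      rw [← mul_assoc]; rfl
  rw [expand]
  have split : ∀ v u, starRingEnd ℂ (x v) * Lmat G m ϑ ε v u * x u
      = (if v = u then (dm G m v : ℂ) * (starRingEnd ℂ (x v) * x v) else 0)
        + ε * ∑ e ∈ (sm m).filter (fun e => G.head e = v ∧ G.tail e = u),
            starRingEnd ℂ (x v) * om m ϑ e * x u := by
    intro v u
    show starRingEnd ℂ (x v) * ((if v = u then ((dm G m v : ℝ) : ℂ) else 0)
      + ε * ∑ e ∈ _, om m ϑ e) * x u = _
    rw [mul_add, add_mul]
    congr 1
    · split_ifs with h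
      · subst h; push_cast; ring
      · ring
    · rw [show starRingEnd ℂ (x v) * (ε * ∑ e ∈ (sm m).filter
            (fun e => G.head e = v ∧ G.tail e = u), om m ϑ e) * x u
          = ε * ((∑ e ∈ (sm m).filter (fun e => G.head e = v ∧ G.tail e = u), om m ϑ e)
              * (starRingEnd ℂ (x v) * x u)) by ring, Finset.sum_mul]
      exact congrArg _ (Finset.sum_congr rfl fun e _ => by ring)
  simp only [split, Finset.sum_add_distrib]
  congr 1
  · rw [← Finset.sum_fiberwise (sm m) G.head
      (fun e => starRingEnd ℂ (x (G.head e)) * x (G.head e))]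
    refine Finset.sum_congr rfl fun v _ => ?_
    rw [Finset.sum_ite_eq Finset.univ v
      (fun _ => (dm G m v : ℂ) * (starRingEnd ℂ (x v) * x v)), if_pos (Finset.mem_univ v)]
    have hconst : ∑ e ∈ (sm m).filter (fun e => G.head e = v),
        starRingEnd ℂ (x (G.head e)) * x (G.head e)
        = ((sm m).filter (fun e => G.head e = v)).card • (starRingEnd ℂ (x v) * x v) := by
      rw [← Finset.sum_const]
      exact Finset.sum_congr rfl fun e he => by rw [(Finset.mem_filter.mp he).2]
    rw [hconst, nsmul_eq_mul]
    rfl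
  · rw [← collapse G m (fun e => starRingEnd ℂ (x (G.head e)) * om m ϑ e * x (G.tail e))]
    simp only [Finset.mul_sum]
    refine Finset.sum_congr rfl fun v _ => Finset.sum_congr rfl fun u _ =>
      Finset.sum_congr rfl fun e he => ?_
    obtain ⟨-, h1, h2⟩ := Finset.mem_filter.mp he
    rw [h1, h2]

lemma L_psd (hm : ∀ e, m (G.rev e) = - m e) (ε : ℂ) (hε : ε = 1 ∨ ε = -1) (x : V → ℂ) :
    0 ≤ (star x ⬝ᵥ (Lmat G m ϑ ε *ᵥ x)).re := by
  have hε1 : starRingEnd ℂ ε = ε := by rcases hε with h | h <;> subst h <;> simp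
  have hε2 : ε * ε = 1 := by rcases hε with h | h <;> subst h <;> ring
  have key : (star x ⬝ᵥ (Lmat G m ϑ ε *ᵥ x)) + (star x ⬝ᵥ (Lmat G m ϑ ε *ᵥ x))
      = ((∑ e ∈ sm m, Complex.normSq (x (G.head e) + ε * om m ϑ e * x (G.tail e)) : ℝ) : ℂ) := by
    rw [quad_eq]
    push_cast
    have expand : ∀ e ∈ sm m, (↑(Complex.normSq (x (G.head e) + ε * om m ϑ e * x (G.tail e))) : ℂ)
        = x (G.head e) * starRingEnd ℂ (x (G.head e))
          + x (G.tail e) * starRingEnd ℂ (x (G.tail e))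
          + ε * (starRingEnd ℂ (om m ϑ e) * x (G.head e) * starRingEnd ℂ (x (G.tail e)))
          + ε * (om m ϑ e * starRingEnd ℂ (x (G.head e)) * x (G.tail e)) := by
      intro e _
      rw [← Complex.mul_conj, map_add, _root_.map_mul, _root_.map_mul, hε1]
      linear_combination (x (G.tail e) * starRingEnd ℂ (x (G.tail e)) * om m ϑ e
          * starRingEnd ℂ (om m ϑ e)) * hε2
        + (x (G.tail e) * starRingEnd ℂ (x (G.tail e))) * om_mul_conj m ϑ e
    rw [Finset.sum_congr rfl expand]
    simp only [Finset.sum_add_distrib, ← Finset.mul_sum]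
    have e1 : ∑ e ∈ sm m, x (G.tail e) * starRingEnd ℂ (x (G.tail e))
        = ∑ e ∈ sm m, x (G.head e) * starRingEnd ℂ (x (G.head e)) := by
      rw [sum_rev G m hm (fun e => x (G.tail e) * starRingEnd ℂ (x (G.tail e)))]
      exact Finset.sum_congr rfl fun e _ => by rw [tail_rev]
    have e2 : ∑ e ∈ sm m, starRingEnd ℂ (om m ϑ e) * x (G.head e) * starRingEnd ℂ (x (G.tail e))
        = ∑ e ∈ sm m, om m ϑ e * starRingEnd ℂ (x (G.head e)) * x (G.tail e) := by
      rw [sum_rev G m hm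
        (fun e => starRingEnd ℂ (om m ϑ e) * x (G.head e) * starRingEnd ℂ (x (G.tail e)))]
      refine Finset.sum_congr rfl fun e _ => ?_
      rw [om_rev G m ϑ hm, Complex.conj_conj, G.head_rev, tail_rev]
      ring
    rw [e1, e2]
    have e3 : ∑ e ∈ sm m, x (G.head e) * starRingEnd ℂ (x (G.head e))
        = ∑ e ∈ sm m, starRingEnd ℂ (x (G.head e)) * x (G.head e) :=
      Finset.sum_congr rfl fun e _ => mul_comm _ _
    rw [e3]
    have e4 : ∑ e ∈ sm m, om m ϑ e * starRingEnd ℂ (x (G.head e)) * x (G.tail e)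
        = ∑ e ∈ sm m, starRingEnd ℂ (x (G.head e)) * om m ϑ e * x (G.tail e) :=
      Finset.sum_congr rfl fun e _ => by ring
    rw [e4]
    ring
  have h2 := congrArg Complex.re key
  rw [Complex.add_re, Complex.ofReal_re] at h2
  have h3 : 0 ≤ ∑ e ∈ sm m, Complex.normSq (x (G.head e) + ε * om m ϑ e * x (G.tail e)) :=
    Finset.sum_nonneg fun e _ => Complex.normSq_nonneg _
  linarith

end Graph

section Weyl

variable {W : Type} [Fintype W] [DecidableEq W]

theorem quad_expand {M : Matrix W W ℂ} (hM : M.IsHermitian) (x : W → ℂ) :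
    star x ⬝ᵥ (M *ᵥ x) =
      ∑ i, (hM.eigenvalues i : ℂ) *
        Complex.normSq ((star (hM.eigenvectorUnitary : Matrix W W ℂ) *ᵥ x) i) := by
  set U : Matrix W W ℂ := (hM.eigenvectorUnitary : Matrix W W ℂ) with hU
  set y := star U *ᵥ x with hy
  have h1 : star x ᵥ* U = star y := by
    rw [hy, star_mulVec, star_eq_conjTranspose, conjTranspose_conjTranspose]
  conv_lhs => rw [hM.spectral_theorem, Unitary.conjStarAlgAut_apply]
  rw [← mulVec_mulVec, ← mulVec_mulVec, dotProduct_mulVec, h1, ← hU, ← hy]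
  unfold dotProduct
  refine Finset.sum_congr rfl fun i _ => ?_
  rw [mulVec_diagonal]
  simp only [Pi.star_apply, Function.comp_apply, RCLike.ofReal_real_eq_id, id_eq]
  rw [show (star (y i) : ℂ) = (starRingEnd ℂ) (y i) from rfl, ← Complex.mul_conj]
  ring_nf
  exact mul_right_comm _ _ _

theorem parseval {M : Matrix W W ℂ} (hM : M.IsHermitian) (x : W → ℂ) :
    ∑ i, Complex.normSq ((star (hM.eigenvectorUnitary : Matrix W W ℂ) *ᵥ x) i)
      = ∑ i, Complex.normSq (x i) := by
  set U : Matrix W W ℂ := (hM.eigenvectorUnitary : Matrix W W ℂ) with hU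
  set y := star U *ᵥ x with hy
  have h1 : star x ᵥ* U = star y := by
    rw [hy, star_mulVec, star_eq_conjTranspose, conjTranspose_conjTranspose]
  have h2 : star y ⬝ᵥ y = star x ⬝ᵥ x := by
    rw [hy, ← h1, dotProduct_mulVec, vecMul_vecMul,
      show U * star U = 1 from Matrix.mem_unitaryGroup_iff.mp hM.eigenvectorUnitary.2,
      vecMul_one]
  have e1 : ∀ z : W → ℂ, star z ⬝ᵥ z = ((∑ i, Complex.normSq (z i) : ℝ) : ℂ) := by
    intro z
    unfold dotProduct
    push_cast
    refine Finset.sum_congr rfl fun i _ => ?_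
    rw [Pi.star_apply, show (star (z i) : ℂ) = (starRingEnd ℂ) (z i) from rfl, mul_comm,
      Complex.mul_conj]
  have h3 := h2
  rw [e1 y, e1 x] at h3
  exact_mod_cast h3

theorem coeff_zero {M : Matrix W W ℂ} (hM : M.IsHermitian) (s : Finset W) (x : W → ℂ)
    (hx : x ∈ Submodule.span ℂ (Set.range fun i : s => (⇑(hM.eigenvectorBasis i) : W → ℂ)))
    {j : W} (hj : j ∉ s) : (star (hM.eigenvectorUnitary : Matrix W W ℂ) *ᵥ x) j = 0 := by
  set L : (W → ℂ) →ₗ[ℂ] ℂ :=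
    (LinearMap.proj j).comp (Matrix.mulVecLin (star (hM.eigenvectorUnitary : Matrix W W ℂ)))
  have hker : Submodule.span ℂ (Set.range fun i : s => (⇑(hM.eigenvectorBasis i) : W → ℂ))
      ≤ LinearMap.ker L := by
    rw [Submodule.span_le]
    rintro _ ⟨i, rfl⟩
    simp only [SetLike.mem_coe, LinearMap.mem_ker, L, LinearMap.comp_apply,
      Matrix.mulVecLin_apply, LinearMap.proj_apply]
    rw [hM.star_eigenvectorUnitary_mulVec]
    exact Pi.single_eq_of_ne (fun h => hj (by rw [h]; exact i.2)) 1
  exact (LinearMap.mem_ker).mp (hker hx)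

theorem rayleigh_upper {M : Matrix W W ℂ} (hM : M.IsHermitian) (s : Finset W) (c : ℝ)
    (hc : ∀ i ∈ s, hM.eigenvalues i ≤ c) (x : W → ℂ)
    (hx : x ∈ Submodule.span ℂ (Set.range fun i : s => (⇑(hM.eigenvectorBasis i) : W → ℂ))) :
    (star x ⬝ᵥ (M *ᵥ x)).re ≤ c * ∑ v, Complex.normSq (x v) := by
  have h1 : (star x ⬝ᵥ (M *ᵥ x)).re = ∑ i, hM.eigenvalues i
      * Complex.normSq ((star (hM.eigenvectorUnitary : Matrix W W ℂ) *ᵥ x) i) := by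
    rw [quad_expand hM x, Complex.re_sum]
    exact Finset.sum_congr rfl fun i _ => by rw [← Complex.ofReal_mul, Complex.ofReal_re]
  rw [h1, ← parseval hM x, Finset.mul_sum]
  refine Finset.sum_le_sum fun i _ => ?_
  by_cases his : i ∈ s
  · exact mul_le_mul_of_nonneg_right (hc i his) (Complex.normSq_nonneg _)
  · rw [coeff_zero hM s x hx his]
    simp

theorem rayleigh_lower {M : Matrix W W ℂ} (hM : M.IsHermitian) (s : Finset W) (c : ℝ)
    (hc : ∀ i ∈ s, c ≤ hM.eigenvalues i) (x : W → ℂ)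
    (hx : x ∈ Submodule.span ℂ (Set.range fun i : s => (⇑(hM.eigenvectorBasis i) : W → ℂ))) :
    c * ∑ v, Complex.normSq (x v) ≤ (star x ⬝ᵥ (M *ᵥ x)).re := by
  have h1 : (star x ⬝ᵥ (M *ᵥ x)).re = ∑ i, hM.eigenvalues i
      * Complex.normSq ((star (hM.eigenvectorUnitary : Matrix W W ℂ) *ᵥ x) i) := by
    rw [quad_expand hM x, Complex.re_sum]
    exact Finset.sum_congr rfl fun i _ => by rw [← Complex.ofReal_mul, Complex.ofReal_re]
  rw [h1, ← parseval hM x, Finset.mul_sum]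
  refine Finset.sum_le_sum fun i _ => ?_
  by_cases his : i ∈ s
  · exact mul_le_mul_of_nonneg_right (hc i his) (Complex.normSq_nonneg _)
  · rw [coeff_zero hM s x hx his]
    simp

theorem finrank_span_eigen {M : Matrix W W ℂ} (hM : M.IsHermitian) (s : Finset W) :
    Module.finrank ℂ
      ↥(Submodule.span ℂ (Set.range fun i : s => (⇑(hM.eigenvectorBasis i) : W → ℂ)))
      = s.card := by
  have li : LinearIndependent ℂ (fun i : s => (⇑(hM.eigenvectorBasis i) : W → ℂ)) :=
    ((hM.eigenvectorBasis.orthonormal.linearIndependent).comp Subtype.val Subtype.val_injective).map'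
      (WithLp.linearEquiv 2 ℂ (W → ℂ)).toLinearMap (LinearEquiv.ker _)
  rw [finrank_span_eq_card li, Fintype.card_coe]

theorem weyl {P R : Matrix W W ℂ} (hP : P.IsHermitian) (hR : R.IsHermitian)
    (hle : ∀ x : W → ℂ, (star x ⬝ᵥ (P *ᵥ x)).re ≤ (star x ⬝ᵥ (R *ᵥ x)).re)
    (p r : Fin (Fintype.card W) → ℝ) (hp : Monotone p) (hr : Monotone r)
    (σ τ : Fin (Fintype.card W) ≃ W)
    (hpe : ∀ i, p i = hP.eigenvalues (σ i)) (hre : ∀ i, r i = hR.eigenvalues (τ i))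
    (k : Fin (Fintype.card W)) : p k ≤ r k := by
  classical
  set sP : Finset W := (Finset.Ici k).image σ with hsP
  set sR : Finset W := (Finset.Iic k).image τ with hsR
  set T := Submodule.span ℂ (Set.range fun i : sP => (⇑(hP.eigenvectorBasis i) : W → ℂ)) with hT
  set S := Submodule.span ℂ (Set.range fun i : sR => (⇑(hR.eigenvectorBasis i) : W → ℂ)) with hS
  have hcardP : sP.card = Fintype.card W - k := by
    rw [hsP, Finset.card_image_of_injective _ σ.injective, Fin.card_Ici]
  have hcardR : sR.card = k + 1 := by
    rw [hsR, Finset.card_image_of_injective _ τ.injective, Fin.card_Iic]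
  have hdim : Module.finrank ℂ ↥(S ⊓ T) > 0 := by
    have h1 := Submodule.finrank_sup_add_finrank_inf_eq S T
    have h2 : Module.finrank ℂ ↥(S ⊔ T) ≤ Fintype.card W := by
      have := Submodule.finrank_le (S ⊔ T)
      simpa [Module.finrank_fintype_fun_eq_card] using this
    have h3 : Module.finrank ℂ ↥S = k + 1 := by rw [hS, finrank_span_eigen, hcardR]
    have h4 : Module.finrank ℂ ↥T = Fintype.card W - k := by
      rw [hT, finrank_span_eigen, hcardP]
    have h5 : (k : ℕ) < Fintype.card W := k.2
    omega
  obtain ⟨⟨x, hxST⟩, hxne⟩ := Module.finrank_pos_iff_exists_ne_zero.mp hdim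
  have hx0 : x ≠ 0 := fun h => hxne (Subtype.ext h)
  have hxS : x ∈ S := hxST.1
  have hxT : x ∈ T := hxST.2
  have hN : 0 < ∑ v, Complex.normSq (x v) := by
    obtain ⟨v, hv⟩ := Function.ne_iff.mp hx0
    exact Finset.sum_pos' (fun i _ => Complex.normSq_nonneg _)
      ⟨v, Finset.mem_univ v, by simpa using Complex.normSq_pos.mpr hv⟩
  have hlow : p k * ∑ v, Complex.normSq (x v) ≤ (star x ⬝ᵥ (P *ᵥ x)).re := by
    refine rayleigh_lower hP sP (p k) ?_ x hxT
    rintro i hi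
    rw [hsP] at hi
    obtain ⟨i', hi', rfl⟩ := Finset.mem_image.mp hi
    rw [← hpe i']
    exact hp (Finset.mem_Ici.mp hi')
  have hup : (star x ⬝ᵥ (R *ᵥ x)).re ≤ r k * ∑ v, Complex.normSq (x v) := by
    refine rayleigh_upper hR sR (r k) ?_ x hxS
    rintro i hi
    rw [hsR] at hi
    obtain ⟨i', hi', rfl⟩ := Finset.mem_image.mp hi
    rw [← hre i']
    exact hr (Finset.mem_Iic.mp hi')
  have htot := le_trans hlow (le_trans (hle x) hup)
  exact le_of_mul_le_mul_right (by linarith [htot]) hN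

theorem exists_sorted (f : W → ℝ) :
    ∃ (p : Fin (Fintype.card W) → ℝ) (σ : Fin (Fintype.card W) ≃ W),
      Monotone p ∧ ∀ i, p i = f (σ i) := by
  classical
  let e := (Fintype.equivFin W).symm
  let π := Tuple.sort (f ∘ e)
  exact ⟨f ∘ e ∘ π, (π : Fin _ ≃ Fin _).trans e, Tuple.monotone_sort (f ∘ e), fun i => rfl⟩

theorem sum_eig {M : Matrix W W ℂ} (hM : M.IsHermitian) :
    ∑ i, hM.eigenvalues i = (M.trace).re := by
  have h2 : M.trace = ∑ i, (hM.eigenvalues i : ℂ) := by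
    conv_lhs => rw [hM.spectral_theorem, Unitary.conjStarAlgAut_apply]
    rw [Matrix.trace_mul_cycle,
      show star (hM.eigenvectorUnitary : Matrix W W ℂ)
          * (hM.eigenvectorUnitary : Matrix W W ℂ) = 1 from
        Matrix.mem_unitaryGroup_iff'.mp hM.eigenvectorUnitary.2,
      one_mul, Matrix.trace_diagonal]
    simp
  rw [h2, Complex.re_sum]
  simp

end Weyl

section Main

variable {V A : Type} [Fintype V] [Fintype A] [DecidableEq V] {d : ℕ}
  (G : OGraph V A) (m : A → Fin d → ℝ) (Q : V → ℝ)

lemma count_symm (hm : ∀ e, m (G.rev e) = - m e) (v u : V) :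
    (univ.filter (fun e => m e = 0 ∧ G.head e = v ∧ G.tail e = u)).card
      = (univ.filter (fun e => m e = 0 ∧ G.head e = u ∧ G.tail e = v)).card := by
  have key : ∀ (v u : V) (a : A),
      a ∈ univ.filter (fun e => m e = 0 ∧ G.head e = v ∧ G.tail e = u) →
      G.rev a ∈ univ.filter (fun e => m e = 0 ∧ G.head e = u ∧ G.tail e = v) := by
    intro v u a ha
    rw [Finset.mem_filter] at ha ⊢
    obtain ⟨-, h1, h2, h3⟩ := ha
    exact ⟨Finset.mem_univ _,
      by rw [hm, h1, neg_zero], by rw [G.head_rev, h3], by rw [tail_rev, h2]⟩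
  exact Finset.card_nbij' (fun e => G.rev e) (fun e => G.rev e) (key v u) (key u v)
    (fun a _ => G.rev_rev a) (fun a _ => G.rev_rev a)

noncomputable def deg0 (v : V) : ℕ := (univ.filter (fun e => m e = 0 ∧ G.head e = v)).card

noncomputable def H0r (v u : V) : ℝ :=
  (if v = u then ((deg0 G m v : ℝ) + Q v) else 0)
    - ((univ.filter (fun e => m e = 0 ∧ G.head e = v ∧ G.tail e = u)).card : ℝ)

noncomputable def H0 : Matrix V V ℂ := Matrix.of fun v u => ((H0r G m Q v u : ℝ) : ℂ)

noncomputable def Cm : Matrix V V ℂ :=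
  Matrix.of fun v u =>
    ((H0r G m Q v u + (if v = u then 2 * (dm G m v : ℝ) else 0) : ℝ) : ℂ)

lemma deg0_symm (hm : ∀ e, m (G.rev e) = - m e) (v u : V) (h : v = u) :
    True := trivial

lemma H0r_symm (hm : ∀ e, m (G.rev e) = - m e) (v u : V) : H0r G m Q v u = H0r G m Q u v := by
  unfold H0r
  rw [count_symm G m hm v u]
  congr 1
  by_cases h : v = u
  · subst h; rfl
  · rw [if_neg h, if_neg (Ne.symm h)]

lemma H0_herm (hm : ∀ e, m (G.rev e) = - m e) : (H0 G m Q).IsHermitian := by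
  rw [Matrix.IsHermitian, ← Matrix.ext_iff]
  intro i j
  rw [Matrix.conjTranspose_apply]
  show star (((H0r G m Q j i : ℝ)) : ℂ) = ((H0r G m Q i j : ℝ) : ℂ)
  rw [RCLike.star_def, Complex.conj_ofReal, H0r_symm G m Q hm]

lemma Cm_herm (hm : ∀ e, m (G.rev e) = - m e) : (Cm G m Q).IsHermitian := by
  rw [Matrix.IsHermitian, ← Matrix.ext_iff]
  intro i j
  rw [Matrix.conjTranspose_apply]
  show star (((H0r G m Q j i + _ : ℝ)) : ℂ) = ((H0r G m Q i j + _ : ℝ) : ℂ)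
  rw [RCLike.star_def, Complex.conj_ofReal, H0r_symm G m Q hm]
  congr 2
  by_cases h : i = j
  · subst h; rfl
  · rw [if_neg h, if_neg (Ne.symm h)]

lemma deg_split (v : V) : G.deg v = deg0 G m v + dm G m v := by
  classical
  unfold OGraph.deg deg0 dm sm
  rw [Finset.filter_filter]
  rw [Finset.card_filter, Finset.card_filter, Finset.card_filter, ← Finset.sum_add_distrib]
  exact Finset.sum_congr rfl fun e _ => by
    by_cases h1 : m e = 0 <;> by_cases h2 : G.head e = v <;> simp [h1, h2]

lemma sum_split (ϑ : Fin d → ℝ) (v u : V) :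
    ∑ e ∈ univ.filter (fun e => G.head e = v ∧ G.tail e = u),
        (if m e = 0 then (1 : ℂ)
          else Complex.exp (Complex.I * ((∑ i, m e i * ϑ i : ℝ) : ℂ)))
      = ((univ.filter (fun e => m e = 0 ∧ G.head e = v ∧ G.tail e = u)).card : ℂ)
        + ∑ e ∈ (sm m).filter (fun e => G.head e = v ∧ G.tail e = u), om m ϑ e := by
  classical
  rw [← Finset.sum_filter_add_sum_filter_not
    (univ.filter (fun e => G.head e = v ∧ G.tail e = u)) (fun e => m e = 0)]
  congr 1
  · rw [Finset.sum_congr rfl (fun e he => if_pos (Finset.mem_filter.mp he).2),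
      Finset.sum_const, nsmul_eq_mul, mul_one]
    congr 1
    rw [Finset.filter_filter]
    congr 1
    ext e
    simp only [Finset.mem_filter, Finset.mem_univ, true_and]
    tauto
  · rw [Finset.sum_congr rfl (fun e he => if_neg (Finset.mem_filter.mp he).2)]
    unfold sm om
    rw [Finset.filter_filter, Finset.filter_filter]
    apply Finset.sum_congr _ (fun e _ => rfl)
    ext e
    simp only [Finset.mem_filter, Finset.mem_univ, true_and]
    tauto

lemma fib_sub_H0 (ϑ : Fin d → ℝ) :
    G.fiberMatrix m Q ϑ - H0 G m Q = Lmat G m ϑ (-1) := by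
  ext v u
  show ((if v = u then (((G.deg v : ℝ) + Q v : ℝ) : ℂ) else 0) - _) - ((H0r G m Q v u : ℝ) : ℂ)
    = (if v = u then ((dm G m v : ℝ) : ℂ) else 0) + _
  rw [sum_split G m ϑ v u]
  unfold H0r
  by_cases h : v = u
  · subst h
    rw [if_pos rfl, if_pos rfl, if_pos rfl, deg_split G m v]
    push_cast
    ring
  · rw [if_neg h, if_neg h, if_neg h]
    push_cast
    ring

lemma Cm_sub_fib (ϑ : Fin d → ℝ) :
    Cm G m Q - G.fiberMatrix m Q ϑ = Lmat G m ϑ 1 := by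
  ext v u
  show ((H0r G m Q v u + _ : ℝ) : ℂ) - ((if v = u then (((G.deg v : ℝ) + Q v : ℝ) : ℂ) else 0) - _)
    = (if v = u then ((dm G m v : ℝ) : ℂ) else 0) + _
  rw [sum_split G m ϑ v u]
  unfold H0r
  by_cases h : v = u
  · subst h
    rw [if_pos rfl, if_pos rfl, if_pos rfl, if_pos rfl, deg_split G m v]
    push_cast
    ring
  · rw [if_neg h, if_neg h, if_neg h, if_neg h]
    push_cast
    ring

lemma sum_dm : ∑ v, (dm G m v : ℝ) = ((sm m).card : ℝ) := by
  have h := Finset.sum_card_fiberwise_eq_card_filter (sm m) univ G.head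
  have h2 : ∑ v, (dm G m v : ℕ) = (sm m).card := by
    unfold dm
    rw [h]
    congr 1
    simp
  exact_mod_cast congrArg (Nat.cast : ℕ → ℝ) h2

theorem main {V A : Type} [Fintype V] [Fintype A] [DecidableEq V]
    {d : ℕ} (G : OGraph V A) {m : A → Fin d → ℝ} (hm : ∀ e, m (G.rev e) = - m e)
    (Q : V → ℝ)
    (lam : Fin (Fintype.card V) → (Fin d → ℝ) → ℝ)
    (hmono : ∀ ϑ, Monotone fun n => lam n ϑ)
    (heig : ∀ ϑ, ∃ (h : (G.fiberMatrix m Q ϑ).IsHermitian)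
      (σ : Fin (Fintype.card V) ≃ V), ∀ n, lam n ϑ = h.eigenvalues (σ n)) :
    ∑ n, ((⨆ ϑ, lam n ϑ) - (⨅ ϑ, lam n ϑ)) ≤ 2 * (OGraph.suppCard m : ℝ) := by
  classical
  have hH0 : (H0 G m Q).IsHermitian := H0_herm G m Q hm
  have hCm : (Cm G m Q).IsHermitian := Cm_herm G m Q hm
  obtain ⟨p, σP, hpmono, hpe⟩ := exists_sorted (hH0.eigenvalues)
  obtain ⟨r, τC, hrmono, hre⟩ := exists_sorted (hCm.eigenvalues)
  -- quadratic form inequalities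
  have hle1 : ∀ ϑ (x : V → ℂ), (star x ⬝ᵥ (H0 G m Q *ᵥ x)).re
      ≤ (star x ⬝ᵥ (G.fiberMatrix m Q ϑ *ᵥ x)).re := by
    intro ϑ x
    have hpsd := L_psd G m ϑ hm (-1) (Or.inr rfl) x
    rw [← fib_sub_H0 G m Q ϑ, Matrix.sub_mulVec, dotProduct_sub, Complex.sub_re] at hpsd
    linarith
  have hle2 : ∀ ϑ (x : V → ℂ), (star x ⬝ᵥ (G.fiberMatrix m Q ϑ *ᵥ x)).re
      ≤ (star x ⬝ᵥ (Cm G m Q *ᵥ x)).re := by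
    intro ϑ x
    have hpsd := L_psd G m ϑ hm 1 (Or.inl rfl) x
    rw [← Cm_sub_fib G m Q ϑ, Matrix.sub_mulVec, dotProduct_sub, Complex.sub_re] at hpsd
    linarith
  -- eigenvalue bounds
  have hlow : ∀ ϑ n, p n ≤ lam n ϑ := by
    intro ϑ n
    obtain ⟨hϑ, σϑ, hϑe⟩ := heig ϑ
    exact weyl hH0 hϑ (hle1 ϑ) p (fun k => lam k ϑ) hpmono (hmono ϑ) σP σϑ hpe hϑe n
  have hup : ∀ ϑ n, lam n ϑ ≤ r n := by
    intro ϑ n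
    obtain ⟨hϑ, σϑ, hϑe⟩ := heig ϑ
    exact weyl hϑ hCm (hle2 ϑ) (fun k => lam k ϑ) r (hmono ϑ) hrmono σϑ τC hϑe hre n
  have hterm : ∀ n, (⨆ ϑ, lam n ϑ) - (⨅ ϑ, lam n ϑ) ≤ r n - p n := by
    intro n
    have h1 : (⨆ ϑ, lam n ϑ) ≤ r n := ciSup_le fun ϑ => hup ϑ n
    have h2 : p n ≤ ⨅ ϑ, lam n ϑ := le_ciInf fun ϑ => hlow ϑ n
    exact sub_le_sub h1 h2
  calc ∑ n, ((⨆ ϑ, lam n ϑ) - (⨅ ϑ, lam n ϑ))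
      ≤ ∑ n, (r n - p n) := Finset.sum_le_sum fun n _ => hterm n
    _ = (∑ n, r n) - (∑ n, p n) := Finset.sum_sub_distrib _ _
    _ = 2 * (OGraph.suppCard m : ℝ) := by
        have hr2 : ∑ n, r n = ∑ w, hCm.eigenvalues w := by
          rw [Finset.sum_congr rfl fun n _ => hre n]
          exact Equiv.sum_comp τC hCm.eigenvalues
        have hp2 : ∑ n, p n = ∑ w, hH0.eigenvalues w := by
          rw [Finset.sum_congr rfl fun n _ => hpe n]
          exact Equiv.sum_comp σP hH0.eigenvalues
        rw [hr2, hp2, sum_eig hCm, sum_eig hH0]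
        have htr : (Cm G m Q).trace - (H0 G m Q).trace
            = ((∑ v, 2 * (dm G m v : ℝ) : ℝ) : ℂ) := by
          rw [Matrix.trace, Matrix.trace, ← Finset.sum_sub_distrib]
          push_cast
          refine Finset.sum_congr rfl fun v _ => ?_
          show ((H0r G m Q v v + (if v = v then 2 * (dm G m v : ℝ) else 0) : ℝ) : ℂ)
              - ((H0r G m Q v v : ℝ) : ℂ) = _
          rw [if_pos rfl]
          push_cast
          ring
        have : ((Cm G m Q).trace).re - ((H0 G m Q).trace).re
            = ∑ v, 2 * (dm G m v : ℝ) := by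
          rw [← Complex.sub_re, htr, Complex.ofReal_re]
        rw [this, ← Finset.mul_sum, sum_dm]
        congr 1

end Main

end SumBandAux

/-- Let `H(ϑ) = H₀ + Δ̃_m(ϑ)` be the fiber Schrödinger
operator, with `H₀ = Δ₀ + Q` independent of `ϑ`. If `λ_n(ϑ)` denote the
eigenvalues of `H(ϑ)` in increasing order (counted with multiplicity), then the
total length of the spectral bands satisfies
`Σ_n (λ_n⁺ − λ_n⁻) ≤ 2 Tr B_m = 4I`, where `λ_n⁻ = inf_ϑ λ_n(ϑ)`,
`λ_n⁺ = sup_ϑ λ_n(ϑ)` and `I = (1/2)·#supp m` (so `4I = 2·#supp m`). -/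
theorem sum_band_lengths_le {V A : Type} [Fintype V] [Fintype A] [DecidableEq V]
    {d : ℕ} (G : OGraph V A) {m : A → Fin d → ℝ} (hm : ∀ e, m (G.rev e) = - m e)
    (Q : V → ℝ)
    (lam : Fin (Fintype.card V) → (Fin d → ℝ) → ℝ)
    (hmono : ∀ ϑ, Monotone fun n => lam n ϑ)
    (heig : ∀ ϑ, ∃ (h : (G.fiberMatrix m Q ϑ).IsHermitian)
      (σ : Fin (Fintype.card V) ≃ V), ∀ n, lam n ϑ = h.eigenvalues (σ n)) :
    ∑ n, ((⨆ ϑ, lam n ϑ) - (⨅ ϑ, lam n ϑ)) ≤ 2 * (OGraph.suppCard m : ℝ) := by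
  classical
  exact SumBandAux.main G hm Q lam hmono heig
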